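/- Let A = {a_1,...,a_n} ⊂ ℕ^d, C = f_A((0,1)^d), and let π_T : ℝ^n → T be the orthogonal projection onto a coordinate subspace T of ℝ^n. Then every nonempty fiber of the restriction π_T|_C is connected; moreover, if the fiber is zero-dimensional then it is a single point. -/

import Mathlib

open MeasureTheory
open scoped ENNReal

/-- The monomial map `f_A`. -/
def monomialMap {d n : ℕ} (a : Fin n → Fin d → ℕ) (t : Fin d → ℝ) : Fin n → ℝ :=
  fun i => ∏ j, t j ^ a i j

/-- The open unit cube `(0,1)^d`. -/
def openUnitCube (d : ℕ) : Set (Fin d → ℝ) := Set.pi Set.univ fun _ => Set.Ioo (0 : ℝ) 1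

/-- Orthogonal projection onto the coordinate subspace spanned by the coordinates in `J`:
the complementary coordinates are set to zero. -/
def coordProj {n : ℕ} (J : Finset (Fin n)) (x : Fin n → ℝ) : Fin n → ℝ :=
  fun j => if j ∈ J then x j else 0

section aux

variable {d n : ℕ} (a : Fin n → Fin d → ℕ)

/-- The exponentiated linear map: `gmap a u i = exp (⟪a i, u⟫)`. -/
noncomputable def gmap (a : Fin n → Fin d → ℕ) (u : Fin d → ℝ) : Fin n → ℝ :=
  fun i => Real.exp (∑ j, (a i j : ℝ) * u j)

lemma gmap_eq (u : Fin d → ℝ) :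
    monomialMap a (fun j => Real.exp (u j)) = gmap a u := by
  funext i
  simp only [monomialMap, gmap, Real.exp_sum]
  exact Finset.prod_congr rfl fun j _ => (Real.exp_nat_mul (u j) (a i j)).symm

/-- The log-coordinates description of the fiber. -/
def Sset (a : Fin n → Fin d → ℕ) (J : Finset (Fin n)) (y : Fin n → ℝ) : Set (Fin d → ℝ) :=
  {u | (∀ j, u j < 0) ∧ ∀ i ∈ J, ∑ j, (a i j : ℝ) * u j = Real.log (y i)}

lemma convex_Sset (J : Finset (Fin n)) (y : Fin n → ℝ) : Convex ℝ (Sset a J y) := by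
  have h1 : Sset a J y = (⋂ j, {u : Fin d → ℝ | u j < 0}) ∩
      ⋂ i ∈ J, {u : Fin d → ℝ | ∑ j, (a i j : ℝ) * u j = Real.log (y i)} := by
    ext u; simp [Sset, Set.mem_iInter]
  rw [h1]
  refine Convex.inter (convex_iInter fun j => ?_) (convex_iInter₂ fun i _ => ?_)
  · exact convex_halfSpace_lt ⟨fun x y => rfl, fun c x => rfl⟩ 0
  · refine convex_hyperplane ⟨fun x y => ?_, fun c x => ?_⟩ _
    · simp [mul_add, Finset.sum_add_distrib]
    · simp [Finset.mul_sum, mul_left_comm]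

lemma fiber_eq (J : Finset (Fin n)) (y : Fin n → ℝ)
    (hy0 : ∀ j ∉ J, y j = 0) (hyp : ∀ j ∈ J, 0 < y j) :
    (monomialMap a '' openUnitCube d) ∩ coordProj J ⁻¹' {y} = gmap a '' Sset a J y := by
  ext x
  constructor
  · rintro ⟨⟨t, ht, rfl⟩, hx⟩
    have htj : ∀ j, 0 < t j ∧ t j < 1 := fun j => ht j (Set.mem_univ j)
    have ht' : (fun j => Real.exp (Real.log (t j))) = t := by
      funext j; exact Real.exp_log (htj j).1
    refine ⟨fun j => Real.log (t j), ⟨fun j => Real.log_neg (htj j).1 (htj j).2, ?_⟩, ?_⟩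
    · intro i hi
      have hxi : monomialMap a t i = y i := by
        have := congrFun (Set.mem_singleton_iff.1 hx) i
        simpa [coordProj, hi] using this
      have hg : gmap a (fun j => Real.log (t j)) i = y i := by
        rw [← gmap_eq, ht', hxi]
      simpa [gmap, ← hg] using (Real.log_exp _).symm
    · rw [← gmap_eq, ht']
  · rintro ⟨u, ⟨hu0, hulin⟩, rfl⟩
    refine ⟨⟨fun j => Real.exp (u j), fun j _ => ⟨Real.exp_pos _, Real.exp_lt_one_iff.2 (hu0 j)⟩,
      gmap_eq a u⟩, ?_⟩
    simp only [Set.mem_preimage, Set.mem_singleton_iff]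
    funext i
    by_cases hi : i ∈ J
    · simp only [coordProj, hi, if_true, gmap]
      rw [hulin i hi, Real.exp_log (hyp i hi)]
    · simp [coordProj, hi, hy0 i hi]

lemma continuous_gmap : Continuous (gmap a) := by
  refine continuous_pi fun i => Real.continuous_exp.comp ?_
  exact continuous_finset_sum _ fun j _ => continuous_const.mul (continuous_apply j)

lemma one_le_dimH_of_Icc_subset {b c : ℝ} (h : b < c) {s : Set ℝ}
    (hs : Set.Icc b c ⊆ s) : (1 : ℝ≥0∞) ≤ dimH s := by
  have hmem : Set.Icc b c ∈ nhds ((b + c) / 2) :=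
    Icc_mem_nhds (by linarith) (by linarith)
  have : dimH (Set.Icc b c) = 1 := by
    rw [Real.dimH_of_mem_nhds hmem]; simp
  calc (1 : ℝ≥0∞) = dimH (Set.Icc b c) := this.symm
    _ ≤ dimH s := dimH_mono hs

end aux

/-- Every nonempty fiber of the restriction to the open toric cube `C` of the orthogonal
projection onto a coordinate subspace is connected; if moreover the fiber is
zero-dimensional (Hausdorff dimension 0) then it is a single point. -/
theorem openToricCube_proj_fibers {d n : ℕ} (a : Fin n → Fin d → ℕ)
    (J : Finset (Fin n)) (y : Fin n → ℝ)
    (hfib : ((monomialMap a '' openUnitCube d) ∩ coordProj J ⁻¹' {y}).Nonempty) :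
    IsPreconnected ((monomialMap a '' openUnitCube d) ∩ coordProj J ⁻¹' {y}) ∧
    (dimH ((monomialMap a '' openUnitCube d) ∩ coordProj J ⁻¹' {y}) = 0 →
      ∃ p, (monomialMap a '' openUnitCube d) ∩ coordProj J ⁻¹' {y} = {p}) := by
  obtain ⟨x₀, hx₀mem, hx₀⟩ := hfib
  obtain ⟨t₀, ht₀, rfl⟩ := hx₀mem
  have hx₀' : coordProj J (monomialMap a t₀) = y := Set.mem_singleton_iff.1 hx₀
  have hy0 : ∀ j ∉ J, y j = 0 := by
    intro j hj
    have := congrFun hx₀' j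
    simpa [coordProj, hj] using this.symm
  have hyp : ∀ j ∈ J, 0 < y j := by
    intro j hj
    have := congrFun hx₀' j
    simp only [coordProj, hj, if_true] at this
    rw [← this]
    exact Finset.prod_pos fun k _ => pow_pos (ht₀ k (Set.mem_univ k)).1 _
  rw [fiber_eq a J y hy0 hyp]
  have hconn : IsPreconnected (gmap a '' Sset a J y) :=
    ((convex_Sset a J y).isPreconnected).image _ (continuous_gmap a).continuousOn
  refine ⟨hconn, fun hdim => ?_⟩
  have hne : (gmap a '' Sset a J y).Nonempty := by
    rw [← fiber_eq a J y hy0 hyp]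
    exact ⟨_, ⟨t₀, ht₀, rfl⟩, hx₀⟩
  obtain ⟨p, hp⟩ := hne
  refine ⟨p, ?_⟩
  have hsub : (gmap a '' Sset a J y).Subsingleton := by
    intro q hq r hr
    by_contra hqr
    obtain ⟨j, hj⟩ : ∃ j, q j ≠ r j := Function.ne_iff.1 hqr
    set F := gmap a '' Sset a J y with hF
    have hlip : LipschitzWith 1 (fun x : Fin n → ℝ => x j) :=
      LipschitzWith.of_dist_le_mul fun x y => by
        simpa using dist_le_pi_dist x y j
    have hdim' : dimH ((fun x : Fin n → ℝ => x j) '' F) = 0 :=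
      le_antisymm (le_trans (hlip.dimH_image_le F) hdim.le) zero_le
    have hconn' : IsPreconnected ((fun x : Fin n → ℝ => x j) '' F) :=
      hconn.image _ (continuous_apply j).continuousOn
    have hbad : (1 : ℝ≥0∞) ≤ dimH ((fun x : Fin n → ℝ => x j) '' F) := by
      rcases lt_or_gt_of_ne hj with h | h
      · exact one_le_dimH_of_Icc_subset h
          (hconn'.Icc_subset ⟨q, hq, rfl⟩ ⟨r, hr, rfl⟩)
      · exact one_le_dimH_of_Icc_subset h
          (hconn'.Icc_subset ⟨r, hr, rfl⟩ ⟨q, hq, rfl⟩)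
    rw [hdim'] at hbad
    exact absurd hbad (by simp)
  exact Set.eq_singleton_iff_unique_mem.2 ⟨hp, fun q hq => hsub hq hp⟩
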